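/- (Theorem 4 of the paper: the critical value is not conservative.) Fix integers n ≥ 1, K ≥ 1, fixed vectors X_1, …, X_n ∈ ℝ^K, β ∈ ℝ^K, ε > 0, finite nonempty sets 𝒱_u, 𝒱_l ⊆ ℝ^K, and α ∈ (0,1). Let q_{1−α} be the (1−α)-quantile of the statistic T*_n(β) computed from n i.i.d. Bernoulli(1/2) outcomes Y*_1, …, Y*_n (this distribution depends only on the fixed objects just listed). Then for every real c < q_{1−α}, there exist a probability space and mutually independent real random variables U_1, …, U_n on it with ℙ(U_i ≥ 0) = 1/2 for every i, such that, setting Y_i = 1{X_i β + U_i ≥ 0}, the resulting test statistic satisfies ℙ(T_n(β) ≤ c) < 1 − α. -/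

import Mathlib

open MeasureTheory ProbabilityTheory

/-- Sample upper moment `m̂_u(b,v)` computed from outcomes `y`. -/
noncomputable def muHatU {n K : ℕ} (X : Fin n → Fin K → ℝ) (b v : Fin K → ℝ)
    (y : Fin n → ℝ) : ℝ :=
  (n : ℝ)⁻¹ * ∑ i, (2 * y i - 1) *
    (if 0 ≤ (∑ j, X i j * b j) ∧ (∑ j, X i j * v j) < 0 then 1 else 0)

/-- Sample lower moment `m̂_l(b,v)` computed from outcomes `y`. -/
noncomputable def muHatL {n K : ℕ} (X : Fin n → Fin K → ℝ) (b v : Fin K → ℝ)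
    (y : Fin n → ℝ) : ℝ :=
  (n : ℝ)⁻¹ * ∑ i, (1 - 2 * y i) *
    (if (∑ j, X i j * b j) ≤ 0 ∧ 0 < (∑ j, X i j * v j) then 1 else 0)

/-- Sample variance `σ̂_u²(b,v)`. -/
noncomputable def sigHatU2 {n K : ℕ} (X : Fin n → Fin K → ℝ) (b v : Fin K → ℝ)
    (y : Fin n → ℝ) : ℝ :=
  (n : ℝ)⁻¹ * (∑ i, (if 0 ≤ (∑ j, X i j * b j) ∧ (∑ j, X i j * v j) < 0
      then (1:ℝ) else 0)) - (muHatU X b v y) ^ 2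

/-- Sample variance `σ̂_l²(b,v)`. -/
noncomputable def sigHatL2 {n K : ℕ} (X : Fin n → Fin K → ℝ) (b v : Fin K → ℝ)
    (y : Fin n → ℝ) : ℝ :=
  (n : ℝ)⁻¹ * (∑ i, (if (∑ j, X i j * b j) ≤ 0 ∧ 0 < (∑ j, X i j * v j)
      then (1:ℝ) else 0)) - (muHatL X b v y) ^ 2

/-- The test statistic `T_n(b)` computed from outcomes `y`. -/
noncomputable def Tstat {n K : ℕ} (X : Fin n → Fin K → ℝ)
    (Vu Vl : Finset (Fin K → ℝ)) (hu : Vu.Nonempty) (hl : Vl.Nonempty)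
    (ε : ℝ) (b : Fin K → ℝ) (y : Fin n → ℝ) : ℝ :=
  max 0 (max
    (Vu.sup' hu fun v =>
      Real.sqrt n * (-(muHatU X b v y)) /
        max (Real.sqrt (sigHatU2 X b v y)) ε)
    (Vl.sup' hl fun v =>
      Real.sqrt n * (-(muHatL X b v y)) /
        max (Real.sqrt (sigHatL2 X b v y)) ε))

/-- Theorem 4: the critical value is not conservative.  For any `c` strictly below the
`(1−α)`-quantile `q_{1−α}` of `T*_n(β)` (whose distribution is that of the statistic
computed from `n` i.i.d. Bernoulli(1/2) outcomes), there is a probability space and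
mutually independent random variables `U₁, …, U_n` with `P(Uᵢ ≥ 0) = 1/2` under which
`P(T_n(β) ≤ c) < 1 − α`. -/
theorem theorem4_not_conservative
    {n K : ℕ} (hn : 1 ≤ n) (hK : 1 ≤ K)
    (X : Fin n → Fin K → ℝ) (β : Fin K → ℝ)
    (ε : ℝ) (hε : 0 < ε)
    (Vu Vl : Finset (Fin K → ℝ)) (hu : Vu.Nonempty) (hl : Vl.Nonempty)
    (α : ℝ) (hα : α ∈ Set.Ioo (0 : ℝ) 1)
    (q : ℝ)
    (hq : q = sInf {c : ℝ | 1 - α ≤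
      ((Finset.univ.filter (fun s : Fin n → Bool =>
          Tstat X Vu Vl hu hl ε β (fun i => if s i then 1 else 0) ≤ c)).card : ℝ)
        / 2 ^ n})
    (c : ℝ) (hc : c < q) :
    ∃ (Ω : Type) (_ : MeasurableSpace Ω) (P : Measure Ω),
      IsProbabilityMeasure P ∧
      ∃ U : Fin n → Ω → ℝ,
        (∀ i, Measurable (U i)) ∧
        iIndepFun U P ∧
        (∀ i, P {ω | 0 ≤ U i ω} = 1/2) ∧
        (P {ω | Tstat X Vu Vl hu hl ε β
            (fun i => if 0 ≤ (∑ j, X i j * β j) + U i ω then 1 else 0) ≤ c}).toReal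
          < 1 - α := by
  classical
  -- the combinatorial/real-analytic key fact
  have hT0 : ∀ y : Fin n → ℝ, 0 ≤ Tstat X Vu Vl hu hl ε β y := fun y => le_max_left 0 _
  have hF : ((Finset.univ.filter (fun s : Fin n → Bool =>
      Tstat X Vu Vl hu hl ε β (fun i => if s i then 1 else 0) ≤ c)).card : ℝ) / 2 ^ n
      < 1 - α := by
    by_contra h
    push_neg at h
    have hbdd : BddBelow {c : ℝ | 1 - α ≤
        ((Finset.univ.filter (fun s : Fin n → Bool =>
          Tstat X Vu Vl hu hl ε β (fun i => if s i then 1 else 0) ≤ c)).card : ℝ)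
        / 2 ^ n} := by
      refine ⟨0, fun x hx => ?_⟩
      by_contra hx0
      push_neg at hx0
      have hfe : (Finset.univ.filter (fun s : Fin n → Bool =>
          Tstat X Vu Vl hu hl ε β (fun i => if s i then 1 else 0) ≤ x)) = ∅ := by
        refine Finset.filter_false_of_mem fun s _ => ?_
        exact not_le.mpr (lt_of_lt_of_le hx0 (hT0 _))
      rw [Set.mem_setOf_eq, hfe] at hx
      simp at hx
      linarith [hα.2]
    have hle : q ≤ c := hq ▸ csInf_le hbdd h
    linarith
  -- the probability space
  let μb : Measure Bool := ((2 : ENNReal)⁻¹) • (Measure.dirac true + Measure.dirac false)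
  have hμb : ∀ A : Set Bool, μb A =
      (if true ∈ A then 2⁻¹ else 0) + (if false ∈ A then 2⁻¹ else 0) := by
    intro A
    have hA : MeasurableSet A := trivial
    simp [μb, Measure.dirac_apply' _ hA, Set.indicator_apply, mul_add]
  have hb1 : ∀ b : Bool, μb {b} = 2⁻¹ := by
    intro b; cases b <;> simp [hμb]
  haveI hμbP : IsProbabilityMeasure μb := by
    constructor
    rw [hμb]
    simpa using ENNReal.inv_two_add_inv_two
  let P : Measure (Fin n → Bool) := Measure.pi fun _ => μb
  haveI : IsProbabilityMeasure P := Measure.pi.instIsProbabilityMeasure (fun _ : Fin n => μb)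
  have hEval : ∀ (i : Fin n) (A : Set Bool), P (Function.eval i ⁻¹' A) = μb A := by
    intro i A
    rw [Set.eval_preimage, Measure.pi_pi]
    have h1 : ∀ j, μb (Function.update (fun _ => (Set.univ : Set Bool)) i A j)
        = if j = i then μb A else 1 := by
      intro j
      rcases eq_or_ne j i with rfl | hj
      · simp
      · rw [Function.update_of_ne hj, if_neg hj, measure_univ]
    rw [Finset.prod_congr rfl fun j _ => h1 j]
    simp
  let g : Fin n → Bool → ℝ := fun i b =>
    if b then 1 + |∑ j, X i j * β j| else -(1 + |∑ j, X i j * β j|)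
  let U : Fin n → (Fin n → Bool) → ℝ := fun i ω => g i (ω i)
  have hUmeas : ∀ i, Measurable (U i) :=
    fun i => Measurable.comp' measurable_from_top (measurable_pi_apply i)
  have hUindep : iIndepFun U P := by
    rw [iIndepFun_iff_measure_inter_preimage_eq_mul]
    intro S sets hsets
    have hinter : (⋂ i ∈ S, U i ⁻¹' sets i)
        = Set.pi Set.univ (fun j => if j ∈ S then g j ⁻¹' sets j else Set.univ) := by
      ext ω
      simp only [Set.mem_iInter, Set.mem_pi, Set.mem_univ, true_implies, Set.mem_preimage]
      constructor
      · intro h j; by_cases hj : j ∈ S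
        · simpa [hj] using h j hj
        · simp [hj]
      · intro h i hi; simpa [hi] using h i
    rw [hinter, Measure.pi_pi]
    have h2 : ∀ j, μb (if j ∈ S then g j ⁻¹' sets j else Set.univ)
        = if j ∈ S then μb (g j ⁻¹' sets j) else 1 := by
      intro j
      split_ifs with hj
      · rfl
      · exact measure_univ
    rw [Finset.prod_congr rfl fun j _ => h2 j, Finset.prod_ite_mem, Finset.univ_inter]
    exact Finset.prod_congr rfl fun i _ => (hEval i _).symm
  have hUhalf : ∀ i, P {ω | 0 ≤ U i ω} = 1 / 2 := by
    intro i
    have h1 : (0:ℝ) < 1 + |∑ j, X i j * β j| := by positivity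
    have hs : {ω : Fin n → Bool | 0 ≤ U i ω} = Function.eval i ⁻¹' ({true} : Set Bool) := by
      ext ω
      simp only [Set.mem_setOf_eq, Set.mem_preimage, Set.mem_singleton_iff, Function.eval]
      constructor
      · intro h0
        by_contra hbn
        have hb : ω i = false := by simpa using hbn
        have hU : U i ω = -(1 + |∑ j, X i j * β j|) := by simp [U, g, hb]
        rw [hU] at h0
        linarith
      · intro hb
        have hU : U i ω = 1 + |∑ j, X i j * β j| := by simp [U, g, hb]
        show 0 ≤ U i ω
        rw [hU]
        linarith
    rw [hs, hEval, hb1]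
    rw [ENNReal.eq_div_iff (by norm_num) (by norm_num)]
    rw [ENNReal.mul_inv_cancel (by norm_num) (by norm_num)]
  have hYeq : ∀ ω : Fin n → Bool,
      (fun i => if 0 ≤ (∑ j, X i j * β j) + U i ω then (1:ℝ) else 0)
        = fun i => if ω i then 1 else 0 := by
    intro ω; funext i
    cases hb : ω i
    · have hU : U i ω = -(1 + |∑ j, X i j * β j|) := by simp [U, g, hb]
      have hlt : (∑ j, X i j * β j) + U i ω < 0 := by
        rw [hU]
        have := le_abs_self (∑ j, X i j * β j)
        linarith
      simp [hb, not_le.mpr hlt]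
    · have hU : U i ω = 1 + |∑ j, X i j * β j| := by simp [U, g, hb]
      have hge : 0 ≤ (∑ j, X i j * β j) + U i ω := by
        rw [hU]
        have := neg_abs_le (∑ j, X i j * β j)
        linarith
      simp [hb, hge]
  have hsing : ∀ s : Fin n → Bool, P ({s} : Set (Fin n → Bool)) = 2⁻¹ ^ n := by
    intro s
    have h3 : ({s} : Set (Fin n → Bool)) = Set.pi Set.univ fun i => {s i} := by
      ext ω
      simp [funext_iff, Set.mem_pi]
    rw [h3, Measure.pi_pi]
    simp [hb1]
  have hset : {ω : Fin n → Bool | Tstat X Vu Vl hu hl ε β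
        (fun i => if 0 ≤ (∑ j, X i j * β j) + U i ω then 1 else 0) ≤ c}
      = ⋃ s ∈ (Finset.univ.filter (fun s : Fin n → Bool =>
          Tstat X Vu Vl hu hl ε β (fun i => if s i then 1 else 0) ≤ c)), {s} := by
    ext ω
    simp [hYeq ω]
  refine ⟨(Fin n → Bool), inferInstance, P, inferInstance, U, hUmeas, hUindep, hUhalf, ?_⟩
  rw [hset, measure_biUnion_finset ?_ fun s _ => measurableSet_singleton s]
  · rw [Finset.sum_congr rfl fun s _ => hsing s, Finset.sum_const, nsmul_eq_mul]
    rw [ENNReal.toReal_mul, ENNReal.toReal_pow, ENNReal.toReal_natCast]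
    simp only [ENNReal.toReal_inv, ENNReal.toReal_ofNat]
    rw [div_eq_mul_inv, ← inv_pow] at hF
    exact hF
  · intro a ha b hb hab
    simp only [Set.disjoint_singleton_left, Set.mem_singleton_iff]
    exact hab
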